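/- Let n = 5/2, q = 2, k < 0, and let c ∈ ℝ. Fix a sign ε ∈ {1, −1}. Then the function u(t,r) = ε·5(3t + r²)/((r(15t + r²) + c√r)·√(−2k)) is a solution of the semilinear radial heat equation u_t = u_rr + (3/2) r⁻¹ u_r + k u³ on any open subset of {(t,r) : r > 0, r(15t + r²) + c√r ≠ 0}. -/

import Mathlib

noncomputable section

def pdt (u : ℝ × ℝ → ℝ) (p : ℝ × ℝ) : ℝ := deriv (fun s => u (s, p.2)) p.1

def pdr (u : ℝ × ℝ → ℝ) (p : ℝ × ℝ) : ℝ := deriv (fun s => u (p.1, s)) p.2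

def pdrr (u : ℝ × ℝ → ℝ) (p : ℝ × ℝ) : ℝ :=
  deriv (fun s => deriv (fun s' => u (p.1, s')) s) p.2

/-- The semilinear radial heat equation for `n = 5/2`, `q = 2`:
`u_t = u_rr + (3/2) r⁻¹ u_r + k u³`. -/
def HeatEqCubic (k : ℝ) (u : ℝ × ℝ → ℝ) (p : ℝ × ℝ) : Prop :=
  pdt u p = pdrr u p + (3 / 2) * (p.2)⁻¹ * pdr u p + k * u p ^ 3

set_option maxHeartbeats 1600000 in
/-- the non-similarity exact solution
`u = ε 5(3t+r²)/((r(15t+r²)+c√r)√(-2k))` for `n = 5/2`, `q = 2`, `k < 0`. -/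
theorem exact_solution_nonsimilarity (k c e : ℝ) (hk : k < 0) (he : e = 1 ∨ e = -1)
    (D : Set (ℝ × ℝ)) (hD : IsOpen D)
    (hDsub : D ⊆ {p : ℝ × ℝ | 0 < p.2 ∧
      p.2 * (15 * p.1 + p.2 ^ 2) + c * Real.sqrt p.2 ≠ 0}) :
    ∀ p ∈ D,
      HeatEqCubic k (fun p : ℝ × ℝ =>
        e * (5 * (3 * p.1 + p.2 ^ 2))
          / ((p.2 * (15 * p.1 + p.2 ^ 2) + c * Real.sqrt p.2)
              * Real.sqrt (-2 * k))) p := by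
  have ha0 : (0:ℝ) < -2 * k := by linarith
  have ha : (0:ℝ) < Real.sqrt (-2 * k) := Real.sqrt_pos.mpr ha0
  have ha2 : Real.sqrt (-2 * k) ^ 2 = -2 * k := Real.sq_sqrt ha0.le
  set a := Real.sqrt (-2 * k) with ha_def
  rintro ⟨t, r⟩ hp
  obtain ⟨hr, hg⟩ := hDsub hp
  simp only [Set.mem_setOf_eq] at hr hg
  have hsr : (0:ℝ) < Real.sqrt r := Real.sqrt_pos.mpr hr
  -- derivative of g in r
  have hG : ∀ x : ℝ, 0 < x → HasDerivAt (fun y : ℝ => y * (15 * t + y ^ 2) + c * Real.sqrt y)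
      (15 * t + 3 * x ^ 2 + c * (Real.sqrt x)⁻¹ / 2) x := by
    intro x hx
    have hsx : (0:ℝ) < Real.sqrt x := Real.sqrt_pos.mpr hx
    have h1 : HasDerivAt (fun y : ℝ => y * (15 * t + y ^ 2))
        (1 * (15 * t + x ^ 2) + x * ((2:ℝ) * x ^ 1 * 1)) x :=
      (hasDerivAt_id x).mul (((hasDerivAt_id x).pow 2).const_add (15 * t))
    have h2 : HasDerivAt (fun y : ℝ => c * Real.sqrt y) (c * (1 / (2 * Real.sqrt x))) x :=
      (Real.hasDerivAt_sqrt hx.ne').const_mul c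
    have h3 := h1.add h2
    refine h3.congr_deriv ?_
    field_simp
    ring
  -- second derivative of g in r
  have hdg : ∀ x : ℝ, 0 < x → HasDerivAt
      (fun y : ℝ => 15 * t + 3 * y ^ 2 + c * (Real.sqrt y)⁻¹ / 2)
      (6 * x - c * (Real.sqrt x)⁻¹ / (4 * x)) x := by
    intro x hx
    have hsx : (0:ℝ) < Real.sqrt x := Real.sqrt_pos.mpr hx
    have h1 : HasDerivAt (fun y : ℝ => 15 * t + 3 * y ^ 2) (3 * ((2:ℝ) * x ^ 1 * 1)) x :=
      (((hasDerivAt_id x).pow 2).const_mul 3).const_add (15 * t)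
    have h2 : HasDerivAt (fun y : ℝ => c * (Real.sqrt y)⁻¹ / 2)
        (c * (-(1 / (2 * Real.sqrt x)) / Real.sqrt x ^ 2) / 2) x :=
      (((Real.hasDerivAt_sqrt hx.ne').inv hsx.ne').const_mul c).div_const 2
    have h3 := h1.add h2
    refine h3.congr_deriv ?_
    rw [Real.sq_sqrt hx.le]
    field_simp
    ring
  -- derivative of numerator in r
  have hN : ∀ x : ℝ, HasDerivAt (fun y : ℝ => e * (5 * (3 * t + y ^ 2))) (e * (10 * x)) x := by
    intro x
    have := ((((hasDerivAt_id x).pow 2).const_add (3 * t)).const_mul 5).const_mul e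
    refine this.congr_deriv ?_
    simp only [id_eq]
    ring
  -- derivative of u in r, on the open region
  have hfd : ∀ x : ℝ, 0 < x → x * (15 * t + x ^ 2) + c * Real.sqrt x ≠ 0 →
      HasDerivAt (fun y : ℝ => e * (5 * (3 * t + y ^ 2)) /
          ((y * (15 * t + y ^ 2) + c * Real.sqrt y) * a))
        ((e * (10 * x) * ((x * (15 * t + x ^ 2) + c * Real.sqrt x) * a)
            - e * (5 * (3 * t + x ^ 2)) * ((15 * t + 3 * x ^ 2 + c * (Real.sqrt x)⁻¹ / 2) * a))
          / ((x * (15 * t + x ^ 2) + c * Real.sqrt x) * a) ^ 2) x := by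
    intro x hx hgx
    exact (hN x).div ((hG x hx).mul_const a) (mul_ne_zero hgx ha.ne')
  -- the open set in r
  have hcont : Continuous (fun x : ℝ => x * (15 * t + x ^ 2) + c * Real.sqrt x) := by
    fun_prop
  have hV : IsOpen {x : ℝ | 0 < x ∧ x * (15 * t + x ^ 2) + c * Real.sqrt x ≠ 0} := by
    exact (isOpen_lt continuous_const continuous_id).inter
      (isOpen_compl_singleton.preimage hcont)
  have hmem : {x : ℝ | 0 < x ∧ x * (15 * t + x ^ 2) + c * Real.sqrt x ≠ 0} ∈ nhds r :=
    hV.mem_nhds ⟨hr, hg⟩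
  have heq : (deriv (fun y : ℝ => e * (5 * (3 * t + y ^ 2)) /
        ((y * (15 * t + y ^ 2) + c * Real.sqrt y) * a)))
      =ᶠ[nhds r] (fun x : ℝ =>
        (e * (10 * x) * ((x * (15 * t + x ^ 2) + c * Real.sqrt x) * a)
            - e * (5 * (3 * t + x ^ 2)) * ((15 * t + 3 * x ^ 2 + c * (Real.sqrt x)⁻¹ / 2) * a))
          / ((x * (15 * t + x ^ 2) + c * Real.sqrt x) * a) ^ 2) := by
    filter_upwards [hmem] with x hx
    exact (hfd x hx.1 hx.2).deriv
  -- second-derivative function has a derivative at r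
  have h1r : HasDerivAt (fun y : ℝ => e * (10 * y)) (e * 10) r := by
    have := ((hasDerivAt_id r).const_mul 10).const_mul e
    refine this.congr_deriv ?_; ring
  have h2r : HasDerivAt (fun y : ℝ => (y * (15 * t + y ^ 2) + c * Real.sqrt y) * a)
      ((15 * t + 3 * r ^ 2 + c * (Real.sqrt r)⁻¹ / 2) * a) r := (hG r hr).mul_const a
  have h4r : HasDerivAt (fun y : ℝ => (15 * t + 3 * y ^ 2 + c * (Real.sqrt y)⁻¹ / 2) * a)
      ((6 * r - c * (Real.sqrt r)⁻¹ / (4 * r)) * a) r := (hdg r hr).mul_const a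
  have hnum := (h1r.mul h2r).sub ((hN r).mul h4r)
  have hden := h2r.pow 2
  have hne2 : ((r * (15 * t + r ^ 2) + c * Real.sqrt r) * a) ^ 2 ≠ 0 :=
    pow_ne_zero 2 (mul_ne_zero hg ha.ne')
  have hF := hnum.div hden hne2
  -- derivative of u in t
  have hut : HasDerivAt (fun s : ℝ => e * (5 * (3 * s + r ^ 2)) /
        ((r * (15 * s + r ^ 2) + c * Real.sqrt r) * a))
      ((e * 15 * ((r * (15 * t + r ^ 2) + c * Real.sqrt r) * a)
          - e * (5 * (3 * t + r ^ 2)) * (r * 15 * a))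
        / ((r * (15 * t + r ^ 2) + c * Real.sqrt r) * a) ^ 2) t := by
    have hn : HasDerivAt (fun s : ℝ => e * (5 * (3 * s + r ^ 2))) (e * 15) t := by
      have := ((((hasDerivAt_id t).const_mul 3).add_const (r ^ 2)).const_mul 5).const_mul e
      refine this.congr_deriv ?_; ring
    have hd : HasDerivAt (fun s : ℝ => (r * (15 * s + r ^ 2) + c * Real.sqrt r) * a)
        (r * 15 * a) t := by
      have := (((((hasDerivAt_id t).const_mul 15).add_const (r ^ 2)).const_mul r).add_const
        (c * Real.sqrt r)).mul_const a
      refine this.congr_deriv ?_; ring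
    exact hn.div hd (mul_ne_zero hg ha.ne')
  -- assemble
  simp only [HeatEqCubic, pdt, pdr, pdrr]
  rw [hut.deriv, (hfd r hr hg).deriv]
  have hrr : deriv (fun s : ℝ => deriv (fun y : ℝ => e * (5 * (3 * t + y ^ 2)) /
        ((y * (15 * t + y ^ 2) + c * Real.sqrt y) * a)) s) r = _ := heq.deriv_eq.trans hF.deriv
  rw [hrr]
  -- algebraic identity
  have hS0 : Real.sqrt r ≠ 0 := hsr.ne'
  have hs2 : Real.sqrt r ^ 2 = r := Real.sq_sqrt hr.le
  have hk2 : k = -(a ^ 2) / 2 := by rw [ha2]; ring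
  rw [hk2]
  generalize hSdef : Real.sqrt r = S at *
  rw [← hs2] at hg ⊢
  simp only [Pi.mul_apply, Pi.sub_apply, Pi.pow_apply, Real.sqrt_sq hsr.le]
  have hg' : S * (15 * t + S ^ 4) + c ≠ 0 := by
    intro h; apply hg; linear_combination S * h
  rcases he with rfl | rfl <;> norm_num <;>
    · field_simp [hg, ha.ne', hS0, hg']
      ring
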